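/- Let H be a Hilbert space and K : H → H a compact linear operator, and let μ ∈ ℂ. If the only solution of u = μKu is u = 0, then for every f ∈ H the equation u = μKu + f has a unique solution u ∈ H (i.e., I - μK is bijective). -/

import Mathlib

open Filter Metric Topology
open scoped InnerProductSpace

section FredholmAux

variable {H : Type*} [NormedAddCommGroup H] [InnerProductSpace ℂ H] [CompleteSpace H]

lemma fredholm_aux_subseq (C : H →L[ℂ] H) (hC : IsCompactOperator C)
    (u : ℕ → H) (r : ℝ) (hu : ∀ n, ‖u n‖ ≤ r) :
    ∃ v, ∃ φ : ℕ → ℕ, StrictMono φ ∧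
      Tendsto (fun n => C (u (φ n))) atTop (𝓝 v) := by
  have hcomp : IsCompact (closure ((C : H →ₗ[ℂ] H) '' closedBall 0 r)) :=
    hC.isCompact_closure_image_closedBall (f := (C : H →ₗ[ℂ] H)) r
  have hmem : ∀ n, C (u n) ∈ closure ((C : H →ₗ[ℂ] H) '' closedBall 0 r) := fun n =>
    subset_closure ⟨u n, by simpa [mem_closedBall_zero_iff] using hu n, rfl⟩
  obtain ⟨v, -, φ, hφ, hconv⟩ := hcomp.tendsto_subseq hmem
  exact ⟨v, φ, hφ, hconv⟩

lemma fredholm_aux_bddBelow (C : H →L[ℂ] H) (hC : IsCompactOperator C)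
    (hinj : ∀ u : H, (ContinuousLinearMap.id ℂ H - C) u = 0 → u = 0) :
    ∃ c : ℝ, 0 < c ∧ ∀ u, c * ‖u‖ ≤ ‖(ContinuousLinearMap.id ℂ H - C) u‖ := by
  set T := ContinuousLinearMap.id ℂ H - C with hTdef
  by_contra hcon
  push_neg at hcon
  have key : ∀ n : ℕ, ∃ w : H, ‖w‖ = 1 ∧ ‖T w‖ < 1 / (n + 1) := by
    intro n
    obtain ⟨u, hu⟩ := hcon (1 / (n + 1)) (by positivity)
    have hu0 : u ≠ 0 := by
      rintro rfl; simp at hu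
    have hun : (0:ℝ) < ‖u‖ := norm_pos_iff.2 hu0
    refine ⟨((‖u‖ : ℂ))⁻¹ • u, ?_, ?_⟩
    · rw [norm_smul]; simp [abs_of_pos hun, inv_mul_cancel₀ hun.ne']
    · rw [map_smul, norm_smul]
      simp only [norm_inv, Complex.norm_real, Real.norm_eq_abs, abs_of_pos hun]
      rw [inv_mul_lt_iff₀ hun]
      calc ‖T u‖ < 1 / (n + 1) * ‖u‖ := hu
        _ = ‖u‖ * (1 / (n + 1)) := by ring
  choose w hw1 hw2 using key
  obtain ⟨v, φ, hφ, hconv⟩ := fredholm_aux_subseq C hC w 1 (fun n => le_of_eq (hw1 n))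
  have hT0 : Tendsto (fun n => T (w (φ n))) atTop (𝓝 0) := by
    refine squeeze_zero_norm (fun n => ?_) tendsto_one_div_add_atTop_nhds_zero_nat
    refine le_trans (le_of_lt (hw2 (φ n))) ?_
    have hle : (n : ℝ) + 1 ≤ (φ n : ℝ) + 1 := by
      have h0 : n ≤ φ n := hφ.le_apply
      have h0' : (n : ℝ) ≤ (φ n : ℝ) := by exact_mod_cast h0
      linarith
    exact one_div_le_one_div_of_le (by positivity) hle
  have hwconv : Tendsto (fun n => w (φ n)) atTop (𝓝 v) := by
    have : (fun n => w (φ n)) = fun n => T (w (φ n)) + C (w (φ n)) := by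
      funext n; simp [hTdef, ContinuousLinearMap.sub_apply]
    rw [this]
    simpa using hT0.add hconv
  have hv1 : ‖v‖ = 1 := by
    have h1 : Tendsto (fun n => ‖w (φ n)‖) atTop (𝓝 ‖v‖) := hwconv.norm
    have h2 : Tendsto (fun _ : ℕ => (1:ℝ)) atTop (𝓝 1) := tendsto_const_nhds
    have : (fun n => ‖w (φ n)‖) = fun _ : ℕ => (1:ℝ) := by funext n; exact hw1 (φ n)
    rw [this] at h1
    exact tendsto_nhds_unique h1 h2
  have hTv : T v = 0 := by
    have h1 : Tendsto (fun n => T (w (φ n))) atTop (𝓝 (T v)) :=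
      (T.continuous.tendsto v).comp hwconv
    exact tendsto_nhds_unique h1 hT0
  have : v = 0 := hinj v hTv
  rw [this] at hv1; simp at hv1

lemma fredholm_aux_surj (C : H →L[ℂ] H) (hC : IsCompactOperator C)
    (hinj : ∀ u : H, u = C u → u = 0) :
    Function.Surjective (ContinuousLinearMap.id ℂ H - C) := by
  set T := ContinuousLinearMap.id ℂ H - C with hTdef
  have hTapp : ∀ u : H, T u = u - C u := fun u => by
    simp [hTdef, ContinuousLinearMap.sub_apply]
  have hinj' : ∀ u : H, T u = 0 → u = 0 := by
    intro u hu
    exact hinj u (by rw [hTapp] at hu; linear_combination (norm := module) hu)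
  obtain ⟨c, hc, hbound⟩ := fredholm_aux_bddBelow C hC hinj'
  -- bound for powers of T
  have hpow : ∀ (n : ℕ) (u : H), c ^ n * ‖u‖ ≤ ‖(T ^ n) u‖ := by
    intro n
    induction n with
    | zero => intro u; simp
    | succ n ih =>
      intro u
      have h1 : (T ^ (n + 1)) u = (T ^ n) (T u) := by
        rw [pow_succ]; rfl
      rw [h1, pow_succ]
      calc c ^ n * c * ‖u‖ = c ^ n * (c * ‖u‖) := by ring
        _ ≤ c ^ n * ‖T u‖ := by
            exact mul_le_mul_of_nonneg_left (hbound u) (by positivity)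
        _ ≤ ‖(T ^ n) (T u)‖ := ih (T u)
  have hinjn : ∀ n : ℕ, Function.Injective ⇑(T ^ n) := by
    intro n x y hxy
    have h0 : (T ^ n) (x - y) = 0 := by rw [map_sub, hxy, sub_self]
    have := hpow n (x - y)
    rw [h0, norm_zero] at this
    have hx : ‖x - y‖ ≤ 0 := by
      have hcn : (0:ℝ) < c ^ n := by positivity
      nlinarith [norm_nonneg (x - y)]
    rw [← sub_eq_zero]
    exact norm_le_zero_iff.1 hx
  -- ranges of powers
  set R : ℕ → Submodule ℂ H := fun n => LinearMap.range ((T ^ n : H →L[ℂ] H) : H →ₗ[ℂ] H) with hRdef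
  have hclosed : ∀ n, IsClosed ((R n : Set H)) := by
    intro n
    have hb : ∀ x, ‖x‖ ≤ ((⟨c, hc.le⟩ : NNReal) ^ n)⁻¹ * ‖(T ^ n) x‖ := by
      intro x
      have h1 := hpow n x
      have hcn : (0:ℝ) < c ^ n := by positivity
      push_cast [NNReal.coe_mk]
      rw [le_inv_mul_iff₀ hcn]
      simpa using h1
    have ha : AntilipschitzWith _ ⇑(T ^ n) := ContinuousLinearMap.antilipschitz_of_bound (T ^ n) hb
    have := ha.isClosed_range (T ^ n).uniformContinuous
    exact this
  have hstep : ∀ n, ∀ x ∈ R n, T x ∈ R (n + 1) := by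
    rintro n x ⟨a, rfl⟩
    exact ⟨a, by rw [pow_succ']; rfl⟩
  have hmono : ∀ {n m : ℕ}, n ≤ m → R m ≤ R n := by
    intro n m hnm
    obtain ⟨k, rfl⟩ := Nat.exists_eq_add_of_le hnm
    rintro x ⟨a, rfl⟩
    exact ⟨(T ^ k) a, by rw [pow_add]; rfl⟩
  -- assume not surjective
  by_contra hns
  simp only [Function.Surjective, not_forall] at hns
  obtain ⟨y, hy⟩ := hns
  rw [not_exists] at hy
  have hy1 : y ∉ R 1 := by
    rintro ⟨a, ha⟩
    exact hy a (by rw [← ha, pow_one]; rfl)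
  have hproper : ∀ n : ℕ, (T ^ n) y ∈ R n ∧ (T ^ n) y ∉ R (n + 1) := by
    intro n
    refine ⟨⟨y, rfl⟩, ?_⟩
    rintro ⟨a, ha⟩
    have h1 : (T ^ (n + 1)) a = (T ^ n) (T a) := by rw [pow_succ]; rfl
    rw [ContinuousLinearMap.coe_coe, h1] at ha
    have : T a = y := hinjn n ha
    exact hy1 ⟨a, by rw [pow_one, ContinuousLinearMap.coe_coe, this]⟩
  -- choose orthogonal unit vectors
  have hxex : ∀ n : ℕ, ∃ x : H, x ∈ R n ∧ ‖x‖ = 1 ∧ ∀ z ∈ R (n + 1), ⟪z, x⟫_ℂ = 0 := by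
    intro n
    haveI : CompleteSpace (R (n + 1)) := (hclosed (n + 1)).completeSpace_coe
    obtain ⟨hv, hnv⟩ := hproper n
    set v := (T ^ n) y
    set d := v - ((R (n + 1)).orthogonalProjectionOnto v : H) with hd
    have hdo : d ∈ (R (n + 1))ᗮ := (R (n + 1)).sub_starProjection_mem_orthogonal v
    have hdne : d ≠ 0 := by
      intro h0
      rw [hd, sub_eq_zero] at h0
      exact hnv (h0 ▸ ((R (n + 1)).orthogonalProjectionOnto v).2)
    have hdn : (0:ℝ) < ‖d‖ := norm_pos_iff.2 hdne
    have hdR : d ∈ R n := by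
      exact Submodule.sub_mem _ hv
        (hmono (Nat.le_succ n) ((R (n + 1)).orthogonalProjectionOnto v).2)
    refine ⟨((‖d‖ : ℂ))⁻¹ • d, Submodule.smul_mem _ _ hdR, ?_, ?_⟩
    · rw [norm_smul]; simp [abs_of_pos hdn, inv_mul_cancel₀ hdn.ne']
    · intro z hz
      rw [inner_smul_right]
      rw [Submodule.mem_orthogonal] at hdo
      rw [hdo z hz, mul_zero]
  choose x hxR hx1 hxo using hxex
  -- separation estimate
  have hsep : ∀ n m : ℕ, n < m → (1:ℝ) ≤ ‖C (x n) - C (x m)‖ := by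
    intro n m hnm
    set wv := T (x n) + x m - T (x m) with hwv
    have hwvmem : wv ∈ R (n + 1) := by
      refine Submodule.sub_mem _ (Submodule.add_mem _ ?_ ?_) ?_
      · exact hstep n (x n) (hxR n)
      · exact hmono hnm (hxR m)
      · exact hmono (Nat.succ_le_of_lt (Nat.lt_succ_of_lt hnm))
          (hstep m (x m) (hxR m))
    have hCeq : C (x n) - C (x m) = x n - wv := by
      rw [hwv]
      have h1 := hTapp (x n); have h2 := hTapp (x m)
      linear_combination (norm := module) h1 - h2
    rw [hCeq]
    have horth : ⟪x n, wv⟫_ℂ = 0 := by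
      have := hxo n wv hwvmem
      rw [← inner_conj_symm, this, map_zero]
    have hsq : ‖x n - wv‖ ^ 2 = 1 + ‖wv‖ ^ 2 := by
      rw [@norm_sub_sq ℂ, horth, hx1 n]
      simp
    nlinarith [norm_nonneg (x n - wv), norm_nonneg wv, sq_nonneg ‖wv‖]
  -- compactness contradiction
  obtain ⟨v, φ, hφ, hconv⟩ := fredholm_aux_subseq C hC x 1 (fun n => le_of_eq (hx1 n))
  have hcauchy : CauchySeq (fun n => C (x (φ n))) := hconv.cauchySeq
  rw [Metric.cauchySeq_iff] at hcauchy
  obtain ⟨N, hN⟩ := hcauchy 1 one_pos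
  have h1 := hN (N + 1) (Nat.le_succ N) N le_rfl
  have h2 := hsep (φ N) (φ (N + 1)) (hφ (Nat.lt_succ_self N))
  rw [dist_eq_norm] at h1
  rw [norm_sub_rev] at h2
  linarith

end FredholmAux

/-- Fredholm alternative, first part: if `u = μ K u` only for `u = 0`, then
`u = μ K u + f` is uniquely solvable for every `f`. -/
theorem fredholm_alternative_injective_implies_bijective
    {H : Type*} [NormedAddCommGroup H] [InnerProductSpace ℂ H] [CompleteSpace H]
    (K : H →L[ℂ] H) (hK : IsCompactOperator K) (μ : ℂ)
    (h : ∀ u : H, u = μ • K u → u = 0) :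
    ∀ f : H, ∃! u : H, u = μ • K u + f := by
  intro f
  set C : H →L[ℂ] H := μ • K with hCdef
  have hC : IsCompactOperator C := by
    have := hK.smul μ
    simpa [hCdef] using this
  have hCapp : ∀ u : H, C u = μ • K u := fun u => by simp [hCdef]
  have hinj : ∀ u : H, u = C u → u = 0 := fun u hu => h u (by rwa [hCapp] at hu)
  obtain ⟨u, hu⟩ := fredholm_aux_surj C hC hinj f
  have huapp : u - C u = f := by
    rw [← hu]; simp [ContinuousLinearMap.sub_apply]
  refine ⟨u, ?_, ?_⟩
  · show u = μ • K u + f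
    rw [← hCapp u, ← huapp]; abel
  · intro u' hu'
    have hu'' : u' = μ • K u' + f := hu'
    have h1 : u' - C u' = f := by
      rw [hCapp u']
      linear_combination (norm := module) hu''
    have h2 : (u' - u) = C (u' - u) := by
      rw [map_sub]
      have h3 := h1.trans huapp.symm
      linear_combination (norm := module) h3
    have h4 := hinj _ h2
    rw [sub_eq_zero] at h4
    exact h4
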